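/- Let F be a field and let M be the linear finite transducer over F with structural matrices A ∈ M_{n×n}(F), B ∈ M_{n×ℓ}(F), C ∈ M_{m×n}(F), D ∈ M_{m×ℓ}(F), with transfer function matrix H(z) = C(I − Az)^{−1}Bz + D, regarded as an m × ℓ matrix over the localization F[z]_S (S = 1 + zF[z]). Suppose P ∈ GL_m(F[z]_S) and Q ∈ GL_ℓ(F[z]_S) satisfy P·H·Q = diag(z^{e_1}, …, z^{e_r}, 0, …, 0) with e_1 ≤ … ≤ e_r. Then for τ ∈ ℕ, M is injective with delay τ if and only if r = ℓ and e_r ≤ τ. -/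

import Mathlib

/-- Extension of the state transition function of a finite transducer to finite words. -/
def deltaStar {X S : Type*} (δ : S → X → S) : S → List X → S
  | s, [] => s
  | s, a :: w => deltaStar δ (δ s a) w

/-- Extension of the output function of a finite transducer to finite words. -/
def lambdaStar {X Y S : Type*} (δ : S → X → S) (lam : S → X → Y) : S → List X → List Y
  | _, [] => []
  | s, a :: w => lam s a :: lambdaStar δ lam (δ s a) w

/-- A linear finite transducer over `F` with structural parameters `ℓ, m, n`, identified
with its quadruple of structural matrices `(A, B, C, D)`; its input alphabet is `F^ℓ`,
its output alphabet is `F^m` and its state space is `F^n`. -/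
structure LFT (F : Type) [Field F] (ℓ m n : ℕ) where
  A : Matrix (Fin n) (Fin n) F
  B : Matrix (Fin n) (Fin ℓ) F
  C : Matrix (Fin m) (Fin n) F
  D : Matrix (Fin m) (Fin ℓ) F

namespace LFT

variable {F : Type} [Field F] {ℓ m n n₁ n₂ : ℕ}

/-- The state transition function `δ(s, x) = As + Bx` of a linear finite transducer. -/
def del (M : LFT F ℓ m n) (s : Fin n → F) (x : Fin ℓ → F) : Fin n → F :=
  M.A.mulVec s + M.B.mulVec x

/-- The output function `λ(s, x) = Cs + Dx` of a linear finite transducer. -/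
def out (M : LFT F ℓ m n) (s : Fin n → F) (x : Fin ℓ → F) : Fin m → F :=
  M.C.mulVec s + M.D.mulVec x


end LFT

/-- A transducer is injective with delay `τ` (`τ`-injective) if for every state `s`,
inputs `x, x''` and input words `α, α''` of length `τ`, `λ(s, xα) = λ(s, x''α'')` implies
`x = x''`. -/
def TauInjective {X Y S : Type*} (δ : S → X → S) (lam : S → X → Y) (τ : ℕ) : Prop :=
  ∀ (s : S) (x x'' : X) (α α'' : List X), α.length = τ → α''.length = τ →
    lambdaStar δ lam s (x :: α) = lambdaStar δ lam s (x'' :: α'') → x = x''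

/-- The multiplicative submonoid `S = 1 + zF[z]` of `F[z]` of polynomials with constant
term `1`. -/
def oneS (F : Type) [Field F] : Submonoid (Polynomial F) where
  carrier := {p : Polynomial F | p.coeff 0 = 1}
  one_mem' := by simp
  mul_mem' := by
    intro a b ha hb
    simp only [Set.mem_setOf_eq] at *
    rw [Polynomial.mul_coeff_zero, ha, hb, one_mul]

/-- The matrix `Az` over `F[z]` associated to a square matrix `A` over `F`. -/
noncomputable def zMatP {F : Type} [Field F] {n : ℕ} (A : Matrix (Fin n) (Fin n) F) :
    Matrix (Fin n) (Fin n) (Polynomial F) :=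
  (Polynomial.X : Polynomial F) • A.map Polynomial.C

/-- The polynomial `f(z) = det(I − Az)`. -/
noncomputable def fPoly {F : Type} [Field F] {n : ℕ} (A : Matrix (Fin n) (Fin n) F) :
    Polynomial F :=
  (1 - zMatP A).det

/-- The polynomial matrix `f·H = C·(I − Az)^⋆·B·z + f·D`. -/
noncomputable def fHMat {F : Type} [Field F] {ℓ m n : ℕ}
    (A : Matrix (Fin n) (Fin n) F) (B : Matrix (Fin n) (Fin ℓ) F)
    (C : Matrix (Fin m) (Fin n) F) (D : Matrix (Fin m) (Fin ℓ) F) :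
    Matrix (Fin m) (Fin ℓ) (Polynomial F) :=
  (Polynomial.X : Polynomial F) •
      (C.map Polynomial.C * (1 - zMatP A).adjugate * B.map Polynomial.C) +
    fPoly A • D.map Polynomial.C

lemma fPoly_mem_oneS {F : Type} [Field F] {n : ℕ} (A : Matrix (Fin n) (Fin n) F) :
    fPoly A ∈ oneS F := by
  show (fPoly A).coeff 0 = 1
  rw [Polynomial.coeff_zero_eq_eval_zero]
  have h1 : Polynomial.eval 0 (fPoly A) =
      ((Polynomial.evalRingHom (0 : F)).mapMatrix (1 - zMatP A)).det :=
    RingHom.map_det (Polynomial.evalRingHom (0 : F)) (1 - zMatP A)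
  have h2 : (Polynomial.evalRingHom (0 : F)).mapMatrix (1 - zMatP A) = 1 := by
    ext i j
    by_cases hij : i = j <;>
      simp [zMatP, Matrix.one_apply, Matrix.sub_apply, Matrix.smul_apply, smul_eq_mul,
        Matrix.map_apply, hij]
  rw [h1, h2, Matrix.det_one]

/-- The transfer function matrix `H(z) = C(I − Az)⁻¹Bz + D` of an LFT, regarded as a
matrix over the localization `F[z]_S` (`S = 1 + zF[z]`): its `(i,j)` entry is the
fraction `(f·H)_{ij} / f` with `f = det(I − Az) ∈ S`. -/
noncomputable def transferMatLoc {F : Type} [Field F] {ℓ m n : ℕ}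
    (A : Matrix (Fin n) (Fin n) F) (B : Matrix (Fin n) (Fin ℓ) F)
    (C : Matrix (Fin m) (Fin n) F) (D : Matrix (Fin m) (Fin ℓ) F) :
    Matrix (Fin m) (Fin ℓ) (Localization (oneS F)) :=
  Matrix.of fun i j => Localization.mk (fHMat A B C D i j) ⟨fPoly A, fPoly_mem_oneS A⟩


namespace LFT
variable {F : Type} [Field F] {ℓ m n : ℕ}

lemma length_lambdaStar (M : LFT F ℓ m n) (s : Fin n → F) (w : List (Fin ℓ → F)) :
    (lambdaStar M.del M.out s w).length = w.length := by
  induction w generalizing s with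
  | nil => rfl
  | cons x w ih => simp [lambdaStar, ih]

lemma lambdaStar_add (M : LFT F ℓ m n) (w w' : List (Fin ℓ → F)) (h : w.length = w'.length)
    (s s' : Fin n → F) :
    lambdaStar M.del M.out (s + s') (List.zipWith (· + ·) w w') =
      List.zipWith (· + ·) (lambdaStar M.del M.out s w) (lambdaStar M.del M.out s' w') := by
  induction w generalizing w' s s' with
  | nil => cases w' with
    | nil => rfl
    | cons => simp at h
  | cons x w ih =>
    cases w' with
    | nil => simp at h
    | cons x' w' =>
      simp only [List.zipWith_cons_cons, lambdaStar]
      rw [List.cons.injEq]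
      refine ⟨?_, ?_⟩
      · show M.out (s + s') (x + x') = M.out s x + M.out s' x'
        simp [out, Matrix.mulVec_add]; abel
      · have : M.del (s + s') (x + x') = M.del s x + M.del s' x' := by
          simp [del, Matrix.mulVec_add]; abel
        rw [this]
        exact ih w' (by simpa using h) _ _

lemma lambdaStar_zero_word (M : LFT F ℓ m n) (k : ℕ) :
    lambdaStar M.del M.out 0 (List.replicate k 0) = List.replicate k 0 := by
  induction k with
  | zero => rfl
  | succ k ih =>
    simp only [List.replicate_succ, lambdaStar]
    have h1 : M.out 0 0 = 0 := by simp [out]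
    have h2 : M.del 0 0 = 0 := by simp [del]
    rw [h1, h2, ih]

def hco (M : LFT F ℓ m n) : ℕ → Matrix (Fin m) (Fin ℓ) F
  | 0 => M.D
  | (k+1) => M.C * M.A ^ k * M.B

lemma lambdaStar_getD (M : LFT F ℓ m n) (w : List (Fin ℓ → F)) (s : Fin n → F) (k : ℕ)
    (hk : k < w.length) :
    (lambdaStar M.del M.out s w).getD k 0 =
      M.C.mulVec ((M.A ^ k).mulVec s) +
        ∑ j ∈ Finset.range (k + 1), (hco M (k - j)).mulVec (w.getD j 0) := by
  induction w generalizing s k with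
  | nil => simp at hk
  | cons x w ih =>
    cases k with
    | zero =>
      simp [lambdaStar, hco, out]
    | succ k =>
      have hk' : k < w.length := by simpa using hk
      show (lambdaStar M.del M.out (M.del s x) w).getD k 0 = _
      rw [ih (M.del s x) k hk']
      rw [Finset.sum_range_succ' (fun j => (hco M (k + 1 - j)).mulVec ((x :: w).getD j 0)) (k+1)]
      have h1 : ∀ j, (x :: w).getD (j + 1) 0 = w.getD j 0 := fun j => rfl
      have h2 : (x :: w).getD 0 0 = x := rfl
      simp only [h1, h2, del, Matrix.mulVec_add, Matrix.mulVec_mulVec, Nat.succ_sub_succ,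
        Nat.sub_zero]
      have h5 : hco M (k+1) = M.C * (M.A ^ k * M.B) := by
        show M.C * M.A ^ k * M.B = _; rw [Matrix.mul_assoc]
      have h4 : M.A ^ k * M.A = M.A ^ (k+1) := (pow_succ _ _).symm
      rw [h4, h5]
      abel


/-- The power series vector associated to an input word. -/
noncomputable def uOfW (w : List (Fin ℓ → F)) : Fin ℓ → PowerSeries F :=
  fun j => PowerSeries.mk fun k => w.getD k 0 j

lemma coeff_uOfW (w : List (Fin ℓ → F)) (k : ℕ) (j : Fin ℓ) :
    PowerSeries.coeff k (uOfW w j) = w.getD k 0 j := PowerSeries.coeff_mk _ _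

lemma coeff_mulVec_conv (M : LFT F ℓ m n) (Hm : Matrix (Fin m) (Fin ℓ) (PowerSeries F))
    (hH : ∀ (k : ℕ) (i : Fin m) (j : Fin ℓ), PowerSeries.coeff k (Hm i j) = hco M k i j)
    (u : Fin ℓ → PowerSeries F) (k : ℕ) (i : Fin m) :
    PowerSeries.coeff k (Hm.mulVec u i) =
      ∑ j ∈ Finset.range (k + 1),
        (hco M (k - j)).mulVec (fun t => PowerSeries.coeff j (u t)) i := by
  have h1 : Hm.mulVec u i = ∑ t : Fin ℓ, Hm i t * u t := by
    simp [Matrix.mulVec, dotProduct]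
  rw [h1, map_sum]
  have h2 : ∀ t : Fin ℓ, PowerSeries.coeff k (Hm i t * u t) =
      ∑ j ∈ Finset.range (k + 1), hco M j i t * PowerSeries.coeff (k - j) (u t) := by
    intro t
    rw [PowerSeries.coeff_mul, Finset.Nat.sum_antidiagonal_eq_sum_range_succ_mk]
    exact Finset.sum_congr rfl fun j _ => by rw [hH]
  simp only [h2]
  rw [Finset.sum_comm]
  rw [← Finset.sum_range_reflect]
  simp only [Nat.add_sub_cancel]
  refine Finset.sum_congr rfl fun j hj => ?_
  have hjk : j ≤ k := Nat.lt_succ_iff.mp (Finset.mem_range.mp hj)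
  have hkk : k - (k - j) = j := Nat.sub_sub_self hjk
  rw [Matrix.mulVec, dotProduct]
  exact Finset.sum_congr rfl fun t _ => by rw [hkk]

lemma lambdaStar_zero_coeff (M : LFT F ℓ m n) (Hm : Matrix (Fin m) (Fin ℓ) (PowerSeries F))
    (hH : ∀ (k : ℕ) (i : Fin m) (j : Fin ℓ), PowerSeries.coeff k (Hm i j) = hco M k i j)
    (w : List (Fin ℓ → F)) (k : ℕ) (hk : k < w.length) :
    (lambdaStar M.del M.out 0 w).getD k 0 =
      fun i => PowerSeries.coeff k (Hm.mulVec (uOfW w) i) := by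
  rw [lambdaStar_getD M w 0 k hk]
  funext i
  rw [coeff_mulVec_conv M Hm hH]
  simp only [Matrix.mulVec_zero, Pi.add_apply, Finset.sum_apply, Pi.zero_apply, zero_add]
  refine Finset.sum_congr rfl fun j _ => ?_
  congr 1
  funext t
  rw [coeff_uOfW]

end LFT

section ListAux

variable {G : Type*} [AddCommGroup G]

lemma zipWith_add_sub (w w'' : List G) (h : w.length = w''.length) :
    List.zipWith (· + ·) w'' (List.zipWith (· - ·) w w'') = w := by
  induction w generalizing w'' with
  | nil => cases w'' with
    | nil => rfl
    | cons => simp at h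
  | cons a w ih =>
    cases w'' with
    | nil => simp at h
    | cons b w'' =>
      simp only [List.zipWith_cons_cons, List.cons.injEq]
      exact ⟨by abel, ih w'' (by simpa using h)⟩

lemma zip_cancel (L L₀ : List G) (h : L.length = L₀.length)
    (he : L = List.zipWith (· + ·) L L₀) : ∀ k < L₀.length, L₀.getD k 0 = 0 := by
  induction L generalizing L₀ with
  | nil =>
    cases L₀ with
    | nil => intro k hk; simp at hk
    | cons => simp at h
  | cons a L ih =>
    cases L₀ with
    | nil => simp at h
    | cons b L₀ =>
      rw [List.zipWith_cons_cons, List.cons.injEq] at he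
      intro k hk
      cases k with
      | zero =>
        show b = 0
        have := he.1
        have h2 : a + b = a + 0 := by rw [add_zero]; exact this.symm
        exact add_left_cancel h2
      | succ k =>
        exact ih L₀ (by simpa using h) he.2 k (by simpa using hk)

lemma eq_replicate_of_getD (L : List G) (h : ∀ k < L.length, L.getD k 0 = 0) :
    L = List.replicate L.length 0 := by
  apply List.ext_getElem
  · simp
  · intro i h1 h2
    rw [List.getElem_replicate, ← List.getD_eq_getElem L 0 h1]
    exact h i h1

lemma getD_eq_zero_of_replicate (L : List G) (nn : ℕ) (h : L = List.replicate nn 0)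
    (k : ℕ) : L.getD k 0 = 0 := by
  subst h
  rcases lt_or_ge k nn with hk | hk
  · rw [List.getD_eq_getElem _ 0 (by simpa using hk), List.getElem_replicate]
  · rw [List.getD_eq_default]
    simpa using hk

end ListAux


section Aux
open Polynomial PowerSeries

variable {F : Type} [Field F] {ℓ m n : ℕ}

/-- The coercion `F[z] → F[[z]]` as a ring hom. -/
noncomputable def psiF (F : Type) [Field F] : Polynomial F →+* PowerSeries F :=
  Polynomial.coeToPowerSeries.ringHom

lemma psiF_unit_on_S (s : oneS F) : IsUnit (psiF F (s : Polynomial F)) := by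
  rw [PowerSeries.isUnit_iff_constantCoeff]
  have h : PowerSeries.constantCoeff (psiF F (s : Polynomial F)) = 1 := by
    have := s.2
    simp only [oneS, Submonoid.mem_mk, Subsemigroup.mem_mk, Set.mem_setOf_eq] at this
    rw [← PowerSeries.coeff_zero_eq_constantCoeff_apply]
    show (PowerSeries.coeff 0) ((s : Polynomial F) : PowerSeries F) = 1
    rw [Polynomial.coeff_coe]
    exact this
  rw [h]; exact isUnit_one

/-- The induced ring hom `F[z]_S → F[[z]]`. -/
noncomputable def phiF (F : Type) [Field F] : Localization (oneS F) →+* PowerSeries F :=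
  IsLocalization.lift (M := oneS F) (S := Localization (oneS F)) psiF_unit_on_S

lemma phiF_algebraMap (p : Polynomial F) :
    phiF F (algebraMap (Polynomial F) (Localization (oneS F)) p) = (p : PowerSeries F) :=
  IsLocalization.lift_eq _ _

lemma phiF_mk (p : Polynomial F) (s : oneS F) :
    phiF F (Localization.mk p s) * ((s : Polynomial F) : PowerSeries F) = (p : PowerSeries F) := by
  have h0 : Localization.mk p s * algebraMap (Polynomial F) (Localization (oneS F)) (s : Polynomial F)
      = algebraMap (Polynomial F) (Localization (oneS F)) p := by
    rw [Localization.mk_eq_mk']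
    exact IsLocalization.mk'_spec _ p s
  have h1 := congrArg (phiF F) h0
  rw [map_mul, phiF_algebraMap, phiF_algebraMap] at h1
  exact h1


/-- The matrix `(I - Az)⁻¹ = Σ Aᵏ zᵏ` over `F[[z]]`. -/
noncomputable def GinvM (A : Matrix (Fin n) (Fin n) F) :
    Matrix (Fin n) (Fin n) (PowerSeries F) :=
  Matrix.of fun i j => PowerSeries.mk fun k => (A ^ k) i j

lemma oneSub_mul_GinvM (A : Matrix (Fin n) (Fin n) F) :
    (1 - (PowerSeries.X : PowerSeries F) • A.map (PowerSeries.C)) * GinvM A = 1 := by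
  rw [sub_mul, one_mul]
  ext i j k
  rw [Matrix.sub_apply, map_sub]
  have hmul : ∀ k : ℕ, PowerSeries.coeff k
      ((((PowerSeries.X : PowerSeries F) • A.map (PowerSeries.C)) * GinvM A) i j) =
      if hk : k = 0 then 0 else (A * A ^ (k - 1)) i j := by
    intro k
    rw [Matrix.mul_apply]
    rw [map_sum]
    cases k with
    | zero =>
      simp only [Matrix.smul_apply, Matrix.map_apply, smul_eq_mul, GinvM, Matrix.of_apply]
      simp [mul_assoc, PowerSeries.coeff_zero_X_mul]
    | succ k =>
      simp only [Matrix.smul_apply, Matrix.map_apply, smul_eq_mul, GinvM, Matrix.of_apply,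
        mul_assoc, PowerSeries.coeff_succ_X_mul, PowerSeries.coeff_C_mul, PowerSeries.coeff_mk]
      simp only [Nat.succ_ne_zero, dif_neg, Nat.add_sub_cancel, Matrix.mul_apply]
      rfl
  rw [hmul]
  cases k with
  | zero =>
    simp only [dif_pos, sub_zero, GinvM, Matrix.of_apply, PowerSeries.coeff_mk, pow_zero]
    by_cases hij : i = j <;>
      simp [Matrix.one_apply, hij, PowerSeries.coeff_mk]
  | succ k =>
    simp only [Nat.succ_ne_zero, dif_neg, GinvM, Matrix.of_apply, PowerSeries.coeff_mk,
      Nat.add_sub_cancel, ← pow_succ']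
    by_cases hij : i = j <;>
      simp [Matrix.one_apply, hij]


lemma map_oneSub_zMatP (A : Matrix (Fin n) (Fin n) F) :
    (1 - zMatP A).map (psiF F) =
      1 - (PowerSeries.X : PowerSeries F) • A.map (PowerSeries.C) := by
  ext i j
  simp only [Matrix.map_apply, Matrix.sub_apply, map_sub, zMatP, Matrix.smul_apply,
    Matrix.map_apply, smul_eq_mul, map_mul]
  have h1 : psiF F (Polynomial.X) = PowerSeries.X := Polynomial.coe_X
  have h2 : ∀ a : F, psiF F (Polynomial.C a) = PowerSeries.C a := fun a => Polynomial.coe_C a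
  have h3 : (1 : Matrix (Fin n) (Fin n) (Polynomial F)) i j =
      Polynomial.C ((1 : Matrix (Fin n) (Fin n) F) i j) := by
    by_cases hij : i = j <;> simp [Matrix.one_apply, hij]
  have h4 : (1 : Matrix (Fin n) (Fin n) (PowerSeries F)) i j =
      PowerSeries.C ((1 : Matrix (Fin n) (Fin n) F) i j) := by
    by_cases hij : i = j <;> simp [Matrix.one_apply, hij]
  rw [h1, h2, h3, h2, h4]

lemma adjugate_eq_det_smul_GinvM (A : Matrix (Fin n) (Fin n) F) :
    Matrix.adjugate (1 - (PowerSeries.X : PowerSeries F) • A.map (PowerSeries.C)) =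
      (1 - (PowerSeries.X : PowerSeries F) • A.map (PowerSeries.C)).det • GinvM A := by
  set W := 1 - (PowerSeries.X : PowerSeries F) • A.map (PowerSeries.C) with hW
  calc Matrix.adjugate W = Matrix.adjugate W * (W * GinvM A) := by
        rw [oneSub_mul_GinvM, Matrix.mul_one]
    _ = (Matrix.adjugate W * W) * GinvM A := by rw [Matrix.mul_assoc]
    _ = (W.det • (1 : Matrix (Fin n) (Fin n) (PowerSeries F))) * GinvM A := by
        rw [Matrix.adjugate_mul]
    _ = W.det • GinvM A := by rw [Matrix.smul_mul, Matrix.one_mul]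

/-- The transfer function matrix as a matrix of power series. -/
noncomputable def HmatM (A : Matrix (Fin n) (Fin n) F) (B : Matrix (Fin n) (Fin ℓ) F)
    (C : Matrix (Fin m) (Fin n) F) (D : Matrix (Fin m) (Fin ℓ) F) :
    Matrix (Fin m) (Fin ℓ) (PowerSeries F) :=
  (PowerSeries.X : PowerSeries F) •
      (C.map (PowerSeries.C) * GinvM A * B.map (PowerSeries.C)) + D.map (PowerSeries.C)

lemma coeff_HmatM_zero (A : Matrix (Fin n) (Fin n) F) (B : Matrix (Fin n) (Fin ℓ) F)
    (C : Matrix (Fin m) (Fin n) F) (D : Matrix (Fin m) (Fin ℓ) F) (i : Fin m) (j : Fin ℓ) :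
    PowerSeries.coeff 0 (HmatM A B C D i j) = D i j := by
  simp only [HmatM, Matrix.add_apply, Matrix.smul_apply, smul_eq_mul, map_add,
    PowerSeries.coeff_zero_X_mul, zero_add]
  simp [Matrix.map_apply]

lemma CGB_apply (A : Matrix (Fin n) (Fin n) F) (B : Matrix (Fin n) (Fin ℓ) F)
    (C : Matrix (Fin m) (Fin n) F) (i : Fin m) (j : Fin ℓ) :
    (C.map (PowerSeries.C) * GinvM A * B.map (PowerSeries.C)) i j =
      PowerSeries.mk fun k => (C * A ^ k * B) i j := by
  apply PowerSeries.ext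
  intro k
  rw [PowerSeries.coeff_mk, Matrix.mul_apply, map_sum, Matrix.mul_apply]
  refine Finset.sum_congr rfl fun u _ => ?_
  rw [Matrix.mul_apply, Matrix.mul_apply, Finset.sum_mul, Finset.sum_mul, map_sum]
  refine Finset.sum_congr rfl fun t _ => ?_
  have h : C.map (PowerSeries.C) i t * GinvM A t u * B.map (PowerSeries.C) u j =
      PowerSeries.C (C i t) * (PowerSeries.C (B u j) * GinvM A t u) := by
    show PowerSeries.C (C i t) * GinvM A t u * PowerSeries.C (B u j) = _
    ring
  rw [h, PowerSeries.coeff_C_mul, PowerSeries.coeff_C_mul]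
  have h2 : PowerSeries.coeff k (GinvM A t u) = (A ^ k) t u := by
    simp [GinvM]
  rw [h2]
  ring

lemma coeff_HmatM_succ (A : Matrix (Fin n) (Fin n) F) (B : Matrix (Fin n) (Fin ℓ) F)
    (C : Matrix (Fin m) (Fin n) F) (D : Matrix (Fin m) (Fin ℓ) F) (k : ℕ) (i : Fin m)
    (j : Fin ℓ) :
    PowerSeries.coeff (k + 1) (HmatM A B C D i j) = (C * A ^ k * B) i j := by
  simp only [HmatM, Matrix.add_apply, Matrix.smul_apply, smul_eq_mul, map_add,
    PowerSeries.coeff_succ_X_mul, CGB_apply, PowerSeries.coeff_mk]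
  have hD : PowerSeries.coeff (k + 1) (D.map (PowerSeries.C) i j) = 0 := by
    simp [Matrix.map_apply, PowerSeries.coeff_C]
  rw [hD, add_zero]


lemma mapMat_add {a b : ℕ} (M N : Matrix (Fin a) (Fin b) (Polynomial F)) :
    (M + N).map (psiF F) = M.map (psiF F) + N.map (psiF F) := by
  refine Matrix.ext fun i j => ?_; simp [Matrix.map_apply, map_add]

lemma mapMat_smul {a b : ℕ} (p : Polynomial F) (M : Matrix (Fin a) (Fin b) (Polynomial F)) :
    (p • M).map (psiF F) = psiF F p • M.map (psiF F) := by
  refine Matrix.ext fun i j => ?_; simp [Matrix.map_apply, map_mul]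

lemma mapMat_C {a b : ℕ} (M : Matrix (Fin a) (Fin b) F) :
    (M.map Polynomial.C).map (psiF F) = M.map (PowerSeries.C) := by
  refine Matrix.ext fun i j => ?_
  simp only [Matrix.map_apply]
  exact Polynomial.coe_C _

lemma psiF_fPoly (A : Matrix (Fin n) (Fin n) F) :
    psiF F (fPoly A) = (1 - (PowerSeries.X : PowerSeries F) • A.map (PowerSeries.C)).det := by
  rw [← map_oneSub_zMatP]
  show psiF F (1 - zMatP A).det = _
  rw [RingHom.map_det, RingHom.mapMatrix_apply]

lemma psiMap_fHMat (A : Matrix (Fin n) (Fin n) F) (B : Matrix (Fin n) (Fin ℓ) F)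
    (C : Matrix (Fin m) (Fin n) F) (D : Matrix (Fin m) (Fin ℓ) F) :
    (fHMat A B C D).map (psiF F) = psiF F (fPoly A) • HmatM A B C D := by
  have hadj : ((1 - zMatP A).adjugate).map (psiF F) = psiF F (fPoly A) • GinvM A := by
    have h1 := RingHom.map_adjugate (psiF F) (1 - zMatP A)
    simp only [RingHom.mapMatrix_apply] at h1
    rw [h1, map_oneSub_zMatP, adjugate_eq_det_smul_GinvM, psiF_fPoly]
  have hX : psiF F Polynomial.X = PowerSeries.X := Polynomial.coe_X
  rw [fHMat, mapMat_add, mapMat_smul, mapMat_smul, Matrix.map_mul, Matrix.map_mul,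
    mapMat_C, mapMat_C, mapMat_C, hadj, hX]
  rw [Matrix.mul_smul, Matrix.smul_mul, HmatM, smul_add]
  rw [smul_smul, smul_smul, mul_comm PowerSeries.X]

lemma phiF_transferMatLoc (A : Matrix (Fin n) (Fin n) F) (B : Matrix (Fin n) (Fin ℓ) F)
    (C : Matrix (Fin m) (Fin n) F) (D : Matrix (Fin m) (Fin ℓ) F) :
    (transferMatLoc A B C D).map (phiF F) = HmatM A B C D := by
  refine Matrix.ext fun i j => ?_
  have hf1 : PowerSeries.constantCoeff (psiF F (fPoly A)) = 1 := by
    rw [← PowerSeries.coeff_zero_eq_constantCoeff_apply]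
    show (PowerSeries.coeff 0) ((fPoly A : Polynomial F) : PowerSeries F) = 1
    rw [Polynomial.coeff_coe]
    exact fPoly_mem_oneS A
  have hf : psiF F (fPoly A) ≠ 0 := by
    intro h
    rw [h, map_zero] at hf1
    exact zero_ne_one hf1
  apply mul_right_cancel₀ hf
  have hmk := phiF_mk (fHMat A B C D i j) ⟨fPoly A, fPoly_mem_oneS A⟩
  have hlhs : (transferMatLoc A B C D).map (phiF F) i j =
      phiF F (Localization.mk (fHMat A B C D i j) ⟨fPoly A, fPoly_mem_oneS A⟩) := rfl
  rw [hlhs]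
  have hmk2 : phiF F (Localization.mk (fHMat A B C D i j) ⟨fPoly A, fPoly_mem_oneS A⟩) *
      psiF F (fPoly A) = psiF F (fHMat A B C D i j) := hmk
  rw [hmk2]
  have h2 : psiF F (fHMat A B C D i j) = psiF F (fPoly A) * HmatM A B C D i j := by
    have h3 : (fHMat A B C D).map (psiF F) i j = psiF F (fHMat A B C D i j) := rfl
    rw [← h3, psiMap_fHMat]
    simp [Matrix.smul_apply]
  rw [h2, mul_comm]

end Aux


section Main
open PowerSeries

variable {F : Type} [Field F] {ℓ m n : ℕ}

lemma coeff_HmatM (M : LFT F ℓ m n) (k : ℕ) (i : Fin m) (j : Fin ℓ) :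
    PowerSeries.coeff k (HmatM M.A M.B M.C M.D i j) = LFT.hco M k i j := by
  cases k with
  | zero => rw [coeff_HmatM_zero]; rfl
  | succ k => rw [coeff_HmatM_succ]; rfl

lemma X_pow_dvd_mulVec {a b : ℕ} (N : Matrix (Fin a) (Fin b) (PowerSeries F))
    (v : Fin b → PowerSeries F) (t : ℕ)
    (h : ∀ j, (PowerSeries.X : PowerSeries F) ^ t ∣ v j) :
    ∀ i, (PowerSeries.X : PowerSeries F) ^ t ∣ N.mulVec v i := by
  intro i
  have h1 : N.mulVec v i = ∑ j, N i j * v j := by simp [Matrix.mulVec, dotProduct]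
  rw [h1]
  exact Finset.dvd_sum fun j _ => Dvd.dvd.mul_left (h j) _

lemma constantCoeff_mulVec {a b : ℕ} (N : Matrix (Fin a) (Fin b) (PowerSeries F))
    (v : Fin b → PowerSeries F) (h : ∀ j, PowerSeries.constantCoeff (v j) = 0) :
    ∀ i, PowerSeries.constantCoeff (N.mulVec v i) = 0 := by
  intro i
  have h1 : N.mulVec v i = ∑ j, N i j * v j := by simp [Matrix.mulVec, dotProduct]
  rw [h1, map_sum]
  simp [map_mul, h]

lemma snf_tauInjective (M : LFT F ℓ m n) (r : ℕ) (hrm : r ≤ m)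
    (P' : Matrix (Fin m) (Fin m) (PowerSeries F)) (Q' : Matrix (Fin ℓ) (Fin ℓ) (PowerSeries F))
    (Δm : Matrix (Fin m) (Fin ℓ) (PowerSeries F)) (e : Fin r → ℕ) (hdQ' : IsUnit Q'.det)
    (hΔ : ∀ (i : Fin m) (j : Fin ℓ), Δm i j =
      if h : (i : ℕ) = (j : ℕ) ∧ (i : ℕ) < r then
        (PowerSeries.X : PowerSeries F) ^ e ⟨(i : ℕ), h.2⟩ else 0)
    (hsnf' : P' * HmatM M.A M.B M.C M.D * Q' = Δm)
    (τ : ℕ) (hr : r = ℓ) (heτ : ∀ i, e i ≤ τ) :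
    TauInjective M.del M.out τ := by
  intro s x x'' α α'' hα hα'' hout
  set w := x :: α with hw
  set w'' := x'' :: α'' with hw''
  have hlen : w''.length = w.length := by simp [hw, hw'', hα, hα'']
  set d := List.zipWith (· - ·) w w'' with hd
  have hdw : List.zipWith (· + ·) w'' d = w := zipWith_add_sub w w'' hlen.symm
  have hdlen : d.length = τ + 1 := by
    rw [hd, List.length_zipWith]; simp [hw, hw'', hα, hα'']
  have hw''len : w''.length = τ + 1 := by simp [hw'', hα'']
  have hlamb : lambdaStar M.del M.out s w =
      List.zipWith (· + ·) (lambdaStar M.del M.out s w'') (lambdaStar M.del M.out 0 d) := by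
    have h1 : w''.length = d.length := by rw [hdlen, hw''len]
    calc lambdaStar M.del M.out s w
        = lambdaStar M.del M.out (s + 0) (List.zipWith (· + ·) w'' d) := by rw [add_zero, hdw]
      _ = _ := LFT.lambdaStar_add M w'' d h1 s 0
  rw [hout] at hlamb
  have hzero := zip_cancel _ _
    (by rw [LFT.length_lambdaStar, LFT.length_lambdaStar, hw''len, hdlen]) hlamb
  have hcoef : ∀ k, k ≤ τ → ∀ i : Fin m,
      PowerSeries.coeff k ((HmatM M.A M.B M.C M.D).mulVec (LFT.uOfW d) i) = 0 := by
    intro k hk i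
    have h6 := hzero k (by rw [LFT.length_lambdaStar, hdlen]; omega)
    rw [LFT.lambdaStar_zero_coeff M _ (coeff_HmatM M) d k (by rw [hdlen]; omega)] at h6
    exact congrFun h6 i
  have hXdvd : ∀ i, (PowerSeries.X : PowerSeries F) ^ (τ + 1) ∣
      (HmatM M.A M.B M.C M.D).mulVec (LFT.uOfW d) i := by
    intro i
    rw [PowerSeries.X_pow_dvd_iff]
    intro k hk
    exact hcoef k (by omega) i
  set u := LFT.uOfW d with hu
  set v := Q'⁻¹.mulVec u with hv
  have hQv : Q'.mulVec v = u := by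
    rw [hv, Matrix.mulVec_mulVec, Matrix.mul_nonsing_inv Q' hdQ', Matrix.one_mulVec]
  have hΔv : ∀ i, (PowerSeries.X : PowerSeries F) ^ (τ + 1) ∣ Δm.mulVec v i := by
    have h7 : Δm.mulVec v = P'.mulVec ((HmatM M.A M.B M.C M.D).mulVec u) := by
      rw [← hsnf', Matrix.mul_assoc, ← Matrix.mulVec_mulVec, ← Matrix.mulVec_mulVec, hQv]
    intro i
    rw [h7]
    exact X_pow_dvd_mulVec P' _ _ hXdvd i
  have hv0 : ∀ j : Fin ℓ, PowerSeries.constantCoeff (v j) = 0 := by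
    intro j
    have hjr : (j : ℕ) < r := by rw [hr]; exact j.2
    have hjm : (j : ℕ) < m := lt_of_lt_of_le hjr hrm
    have h8 := hΔv ⟨(j : ℕ), hjm⟩
    have h9 : Δm.mulVec v ⟨(j : ℕ), hjm⟩ =
        (PowerSeries.X : PowerSeries F) ^ e ⟨(j : ℕ), hjr⟩ * v j := by
      have h9a : Δm.mulVec v ⟨(j : ℕ), hjm⟩ = ∑ t, Δm ⟨(j : ℕ), hjm⟩ t * v t := by
        simp [Matrix.mulVec, dotProduct]
      rw [h9a, Finset.sum_eq_single j]
      · rw [hΔ, dif_pos ⟨rfl, hjr⟩]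
      · intro b _ hbj
        rw [hΔ, dif_neg, zero_mul]
        rintro ⟨h1, -⟩
        exact hbj (Fin.ext h1.symm)
      · intro h
        exact absurd (Finset.mem_univ j) h
    rw [h9] at h8
    have h10 : (PowerSeries.X : PowerSeries F) ^ e ⟨(j : ℕ), hjr⟩ * PowerSeries.X ∣
        (PowerSeries.X : PowerSeries F) ^ e ⟨(j : ℕ), hjr⟩ * v j := by
      refine dvd_trans ?_ h8
      rw [← pow_succ]
      exact pow_dvd_pow _ (by have := heτ ⟨(j : ℕ), hjr⟩; omega)
    have h11 : (PowerSeries.X : PowerSeries F) ∣ v j :=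
      (mul_dvd_mul_iff_left (pow_ne_zero _ PowerSeries.X_ne_zero)).mp h10
    exact PowerSeries.X_dvd_iff.mp h11
  have hu0 : ∀ t : Fin ℓ, PowerSeries.constantCoeff (u t) = 0 := by
    intro t
    rw [← hQv]
    exact constantCoeff_mulVec Q' v hv0 t
  have hxt : ∀ t0 : Fin ℓ, (x - x'') t0 = 0 := by
    intro t0
    have h12 := hu0 t0
    rw [hu, ← PowerSeries.coeff_zero_eq_constantCoeff_apply, LFT.coeff_uOfW] at h12
    have h13 : d.getD 0 0 = x - x'' := rfl
    rw [h13] at h12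
    exact h12
  have h14 : x - x'' = 0 := funext hxt
  exact sub_eq_zero.mp h14

lemma snf_not_tauInjective (M : LFT F ℓ m n) (r : ℕ) (hrℓ : r ≤ ℓ)
    (P' : Matrix (Fin m) (Fin m) (PowerSeries F)) (Q' : Matrix (Fin ℓ) (Fin ℓ) (PowerSeries F))
    (Δm : Matrix (Fin m) (Fin ℓ) (PowerSeries F)) (e : Fin r → ℕ)
    (hdP' : IsUnit P'.det) (hdQ' : IsUnit Q'.det)
    (hΔ : ∀ (i : Fin m) (j : Fin ℓ), Δm i j =
      if h : (i : ℕ) = (j : ℕ) ∧ (i : ℕ) < r then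
        (PowerSeries.X : PowerSeries F) ^ e ⟨(i : ℕ), h.2⟩ else 0)
    (hsnf' : P' * HmatM M.A M.B M.C M.D * Q' = Δm)
    (τ : ℕ) (hcon : ¬(r = ℓ ∧ ∀ i, e i ≤ τ)) :
    ¬ TauInjective M.del M.out τ := by
  intro hinj
  obtain ⟨j, hj⟩ : ∃ j : Fin ℓ, ∀ i : Fin m,
      (PowerSeries.X : PowerSeries F) ^ (τ + 1) ∣ Δm.mulVec (Pi.single j 1) i := by
    by_cases hr : r = ℓ
    · push_neg at hcon
      obtain ⟨i1, hi1⟩ := hcon hr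
      refine ⟨⟨(i1 : ℕ), by rw [← hr]; exact i1.2⟩, fun i => ?_⟩
      rw [Matrix.mulVec_single]
      simp only [MulOpposite.op_one, one_smul, Matrix.col_apply]
      rw [hΔ]
      by_cases h : (i : ℕ) = (i1 : ℕ) ∧ (i : ℕ) < r
      · rw [dif_pos ⟨h.1, h.2⟩]
        have he1 : e ⟨(i : ℕ), h.2⟩ = e i1 := by
          congr 1
          exact Fin.ext h.1
        rw [he1]
        exact pow_dvd_pow _ (by omega)
      · rw [dif_neg h]
        exact dvd_zero _
    · have hrl : r < ℓ := lt_of_le_of_ne hrℓ hr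
      refine ⟨⟨r, hrl⟩, fun i => ?_⟩
      rw [Matrix.mulVec_single]
      simp only [MulOpposite.op_one, one_smul, Matrix.col_apply]
      rw [hΔ, dif_neg]
      · exact dvd_zero _
      · rintro ⟨h1, h2⟩
        rw [h1] at h2
        exact lt_irrefl r h2
  set u := Q'.mulVec (Pi.single j 1) with hu
  have hHu : ∀ i, (PowerSeries.X : PowerSeries F) ^ (τ + 1) ∣
      (HmatM M.A M.B M.C M.D).mulVec u i := by
    have h1 : HmatM M.A M.B M.C M.D * Q' = P'⁻¹ * Δm := by
      have h2 := congrArg (fun W => P'⁻¹ * W) hsnf'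
      rw [← Matrix.mul_assoc, ← Matrix.mul_assoc, Matrix.nonsing_inv_mul P' hdP',
        Matrix.one_mul] at h2
      exact h2
    intro i
    have h3 : (HmatM M.A M.B M.C M.D).mulVec u =
        P'⁻¹.mulVec (Δm.mulVec (Pi.single j 1)) := by
      rw [hu, Matrix.mulVec_mulVec, h1, ← Matrix.mulVec_mulVec]
    rw [h3]
    exact X_pow_dvd_mulVec P'⁻¹ _ _ hj i
  have hucol : ∀ t, u t = Q' t j := by
    intro t
    rw [hu, Matrix.mulVec_single]
    exact mul_one _
  have hex : ∃ t0, PowerSeries.constantCoeff (u t0) ≠ 0 := by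
    by_contra hno
    push_neg at hno
    have hdet0 : (Q'.map (PowerSeries.constantCoeff)).det = 0 :=
      Matrix.det_eq_zero_of_column_eq_zero j
        (fun t => by rw [Matrix.map_apply, ← hucol t]; exact hno t)
    have hdet1 : IsUnit ((Q'.map (PowerSeries.constantCoeff)).det) := by
      have h4 := PowerSeries.isUnit_constantCoeff Q'.det hdQ'
      rwa [RingHom.map_det, RingHom.mapMatrix_apply] at h4
    rw [hdet0] at hdet1
    exact not_isUnit_zero hdet1
  obtain ⟨t0, ht0⟩ := hex
  set x : Fin ℓ → F := fun t => PowerSeries.coeff 0 (u t) with hx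
  set αl : List (Fin ℓ → F) :=
    List.ofFn (fun k : Fin τ => fun t => PowerSeries.coeff ((k : ℕ) + 1) (u t)) with hαl
  have hαlen : αl.length = τ := by simp [hαl]
  set w := x :: αl with hwdef
  have hwlen : w.length = τ + 1 := by simp [hwdef, hαlen]
  have hag : ∀ k, k ≤ τ → ∀ t, w.getD k 0 t = PowerSeries.coeff k (u t) := by
    intro k hk t
    cases k with
    | zero => rfl
    | succ k' =>
      have hk' : k' < τ := by omega
      show αl.getD k' 0 t = _
      rw [hαl]
      rw [List.getD_eq_getElem _ 0 (by simpa using hk'), List.getElem_ofFn]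
  have hlz : ∀ k, k < w.length → (lambdaStar M.del M.out 0 w).getD k 0 = 0 := by
    intro k hk
    rw [LFT.lambdaStar_zero_coeff M _ (coeff_HmatM M) w k hk]
    have hkτ : k ≤ τ := by rw [hwlen] at hk; omega
    funext i
    have hconv1 := LFT.coeff_mulVec_conv M _ (coeff_HmatM M) (LFT.uOfW w) k i
    have hconv2 := LFT.coeff_mulVec_conv M _ (coeff_HmatM M) u k i
    have hsame : PowerSeries.coeff k ((HmatM M.A M.B M.C M.D).mulVec (LFT.uOfW w) i) =
        PowerSeries.coeff k ((HmatM M.A M.B M.C M.D).mulVec u i) := by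
      rw [hconv1, hconv2]
      refine Finset.sum_congr rfl fun j' hj' => ?_
      have hj'k : j' ≤ k := Nat.lt_succ_iff.mp (Finset.mem_range.mp hj')
      congr 1
      funext t
      rw [LFT.coeff_uOfW, hag j' (le_trans hj'k hkτ) t]
    have h6 := hHu i
    rw [PowerSeries.X_pow_dvd_iff] at h6
    show PowerSeries.coeff k ((HmatM M.A M.B M.C M.D).mulVec (LFT.uOfW w) i) = 0
    rw [hsame]
    exact h6 k (by omega)
  have hrep : lambdaStar M.del M.out 0 w = List.replicate (τ + 1) 0 := by
    have h5 := eq_replicate_of_getD (lambdaStar M.del M.out 0 w)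
      (fun k hk => hlz k (by rwa [LFT.length_lambdaStar] at hk))
    rwa [LFT.length_lambdaStar, hwlen] at h5
  have hzw : lambdaStar M.del M.out 0 ((0 : Fin ℓ → F) :: List.replicate τ 0) =
      List.replicate (τ + 1) 0 := by
    have h7 : (0 : Fin ℓ → F) :: List.replicate τ 0 = List.replicate (τ + 1) 0 := by
      rw [List.replicate_succ]
    rw [h7, LFT.lambdaStar_zero_word]
  have hxeq : x = 0 := by
    refine hinj 0 x 0 αl (List.replicate τ 0) hαlen (List.length_replicate ..) ?_
    rw [← hwdef, hrep, hzw]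
  apply ht0
  rw [← PowerSeries.coeff_zero_eq_constantCoeff_apply]
  have := congrFun hxeq t0
  rw [hx] at this
  exact this

end Main

/-- if the transfer function matrix `H` of an LFT `M`, regarded as a matrix
over `F[z]_S` (`S = 1 + zF[z]`), has Smith normal form
`P·H·Q = diag(z^{e₁}, …, z^{e_r}, 0, …, 0)` with `P, Q` invertible over `F[z]_S` and
`e₁ ≤ … ≤ e_r`, then `M` is injective with delay `τ` if and only if `r = ℓ` and
`e_r ≤ τ` (equivalently, since `e` is monotone, all `e_i ≤ τ`). -/
theorem tauInjective_iff_snf {F : Type} [Field F] {ℓ m n : ℕ}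
    (hℓ : 0 < ℓ) (hm : 0 < m) (hn : 0 < n) (M : LFT F ℓ m n)
    (r : ℕ) (hrm : r ≤ m) (hrℓ : r ≤ ℓ)
    (P : Matrix (Fin m) (Fin m) (Localization (oneS F)))
    (Q : Matrix (Fin ℓ) (Fin ℓ) (Localization (oneS F)))
    (e : Fin r → ℕ) (hP : IsUnit P.det) (hQ : IsUnit Q.det) (he : Monotone e)
    (hsnf : P * transferMatLoc M.A M.B M.C M.D * Q = Matrix.of (fun (i : Fin m) (j : Fin ℓ) =>
      if h : (i : ℕ) = (j : ℕ) ∧ (i : ℕ) < r then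
        algebraMap (Polynomial F) (Localization (oneS F)) Polynomial.X ^ e ⟨(i : ℕ), h.2⟩
      else 0))
    (τ : ℕ) :
    TauInjective M.del M.out τ ↔ r = ℓ ∧ ∀ i : Fin r, e i ≤ τ := by
  have hdP' : IsUnit ((P.map (phiF F)).det) := by
    have h1 := hP.map (phiF F)
    rwa [RingHom.map_det, RingHom.mapMatrix_apply] at h1
  have hdQ' : IsUnit ((Q.map (phiF F)).det) := by
    have h1 := hQ.map (phiF F)
    rwa [RingHom.map_det, RingHom.mapMatrix_apply] at h1
  have hsnf' : P.map (phiF F) * HmatM M.A M.B M.C M.D * Q.map (phiF F) =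
      Matrix.of (fun (i : Fin m) (j : Fin ℓ) =>
        if h : (i : ℕ) = (j : ℕ) ∧ (i : ℕ) < r then
          (PowerSeries.X : PowerSeries F) ^ e ⟨(i : ℕ), h.2⟩ else 0) := by
    have h1 := congrArg
      (fun (W : Matrix (Fin m) (Fin ℓ) (Localization (oneS F))) => W.map (phiF F)) hsnf
    rw [Matrix.map_mul, Matrix.map_mul, phiF_transferMatLoc] at h1
    rw [h1]
    refine Matrix.ext fun i j => ?_
    simp only [Matrix.map_apply, Matrix.of_apply]
    by_cases h : (i : ℕ) = (j : ℕ) ∧ (i : ℕ) < r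
    · rw [dif_pos h, dif_pos h, map_pow, phiF_algebraMap, Polynomial.coe_X]
    · rw [dif_neg h, dif_neg h, map_zero]
  have hΔ : ∀ (i : Fin m) (j : Fin ℓ),
      (Matrix.of (fun (i : Fin m) (j : Fin ℓ) =>
        if h : (i : ℕ) = (j : ℕ) ∧ (i : ℕ) < r then
          (PowerSeries.X : PowerSeries F) ^ e ⟨(i : ℕ), h.2⟩ else 0)) i j =
      if h : (i : ℕ) = (j : ℕ) ∧ (i : ℕ) < r then
        (PowerSeries.X : PowerSeries F) ^ e ⟨(i : ℕ), h.2⟩ else 0 := fun i j => rfl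
  constructor
  · intro hinj
    by_contra hcon
    exact snf_not_tauInjective M r hrℓ (P.map (phiF F)) (Q.map (phiF F)) _ e hdP' hdQ' hΔ
      hsnf' τ hcon hinj
  · rintro ⟨hr, he'⟩
    exact snf_tauInjective M r hrm (P.map (phiF F)) (Q.map (phiF F)) _ e hdQ' hΔ hsnf' τ hr he'
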